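/- Let M = [[A,B],[C,Aᵀ]] be a 2n×2n real matrix with B = Bᵀ, C = Cᵀ, AB = BAᵀ, AᵀC = CA, A² - BC = I. Then the characteristic polynomial of M satisfies p_M(t) = det(t²I - 2tA + I) for all t. -/
import Mathlib


open Matrix Polynomial

private lemma eval_charpoly'' {m : Type*} [DecidableEq m] [Fintype m]
    (M : Matrix m m ℝ) (t : ℝ) :
    M.charpoly.eval t = (t • (1 : Matrix m m ℝ) - M).det := by
  have h := RingHom.map_det (evalRingHom t) (charmatrix M)
  have h2 : (charmatrix M).map (evalRingHom t) = t • (1 : Matrix m m ℝ) - M := by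
    ext i j
    by_cases hij : i = j
    · subst hij
      simp [charmatrix_apply_eq, Matrix.one_apply]
    · simp [charmatrix_apply_ne _ _ _ hij, Matrix.one_apply_ne hij]
  rw [Matrix.charpoly]
  calc (charmatrix M).det.eval t = (evalRingHom t) (charmatrix M).det := rfl
    _ = ((charmatrix M).map (evalRingHom t)).det := h
    _ = (t • (1 : Matrix m m ℝ) - M).det := by rw [h2]

private lemma key_det (n : ℕ) (A B C : Matrix (Fin n) (Fin n) ℝ)
    (hAB : A * B = B * Aᵀ) (hABC : A * A - B * C = 1) (t : ℝ)
    (h : IsUnit (t • (1 : Matrix (Fin n) (Fin n) ℝ) - A).det) :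
    (t • (1 : Matrix (Fin n ⊕ Fin n) (Fin n ⊕ Fin n) ℝ) - fromBlocks A B C Aᵀ).det
      = ((t ^ 2 + 1) • (1 : Matrix (Fin n) (Fin n) ℝ) - (2 * t) • A).det := by
  set P := t • (1 : Matrix (Fin n) (Fin n) ℝ) - A with hPdef
  have hPT : Pᵀ = t • (1 : Matrix (Fin n) (Fin n) ℝ) - Aᵀ := by
    rw [hPdef, transpose_sub, transpose_smul, transpose_one]
  have hmat : t • (1 : Matrix (Fin n ⊕ Fin n) (Fin n ⊕ Fin n) ℝ) - fromBlocks A B C Aᵀ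
      = fromBlocks P (-B) (-C) Pᵀ := by
    rw [← fromBlocks_one, fromBlocks_smul, hPT]
    ext i j
    rcases i with i | i <;> rcases j with j | j <;>
      simp [fromBlocks, Matrix.sub_apply, hPdef, Matrix.smul_apply, Matrix.one_apply]
  haveI : Invertible P := invertibleOfIsUnitDet _ h
  haveI : Invertible Pᵀ := invertibleOfIsUnitDet _ (by rw [det_transpose]; exact h)
  have hPB : P * B = B * Pᵀ := by
    rw [hPdef, hPT, sub_mul, mul_sub, smul_mul_assoc, mul_smul_comm, one_mul, mul_one, hAB]
  have hinv : B * ⅟Pᵀ = ⅟P * B := by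
    calc B * ⅟Pᵀ = ⅟P * P * (B * ⅟Pᵀ) := by rw [invOf_mul_self, Matrix.one_mul]
      _ = ⅟P * (P * B) * ⅟Pᵀ := by simp only [Matrix.mul_assoc]
      _ = ⅟P * (B * Pᵀ) * ⅟Pᵀ := by rw [hPB]
      _ = ⅟P * B * (Pᵀ * ⅟Pᵀ) := by simp only [Matrix.mul_assoc]
      _ = ⅟P * B := by rw [mul_invOf_self, Matrix.mul_one]
  have hBC : B * C = A * A - 1 := by
    rw [sub_eq_iff_eq_add] at hABC
    rw [hABC, add_sub_cancel_left]
  have hPP : P * P - (A * A - 1)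
      = (t ^ 2 + 1) • (1 : Matrix (Fin n) (Fin n) ℝ) - (2 * t) • A := by
    rw [hPdef]
    simp only [sub_mul, mul_sub, smul_mul_assoc, mul_smul_comm, smul_smul,
      Matrix.one_mul, Matrix.mul_one]
    module
  have hsplit : P - -B * ⅟Pᵀ * -C = ⅟P * (P * P - (A * A - 1)) := by
    rw [Matrix.mul_sub, ← Matrix.mul_assoc (⅟P) P P, invOf_mul_self, Matrix.one_mul, ← hBC]
    simp only [Matrix.neg_mul, Matrix.mul_neg, neg_neg]
    rw [hinv, Matrix.mul_assoc]
  rw [hmat, det_fromBlocks₂₂, hsplit, hPP, det_mul, det_transpose, ← mul_assoc,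
    ← det_mul, mul_invOf_self, det_one, one_mul]

theorem stmt_3 (n : ℕ) (A B C : Matrix (Fin n) (Fin n) ℝ)
    (hB : Bᵀ = B) (hC : Cᵀ = C)
    (hAB : A * B = B * Aᵀ) (hAC : Aᵀ * C = C * A)
    (hABC : A * A - B * C = 1) :
    ∀ t : ℝ, (fromBlocks A B C Aᵀ).charpoly.eval t
      = ((t ^ 2 + 1) • (1 : Matrix (Fin n) (Fin n) ℝ) - (2 * t) • A).det := by
  set q : ℝ[X] := (((X ^ 2 + 1 : ℝ[X])) • (1 : Matrix (Fin n) (Fin n) ℝ[X])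
      - ((2 * X : ℝ[X])) • (A.map Polynomial.C)).det with hqdef
  have hq : ∀ t : ℝ, q.eval t
      = ((t ^ 2 + 1) • (1 : Matrix (Fin n) (Fin n) ℝ) - (2 * t) • A).det := by
    intro t
    have h1 := RingHom.map_det (evalRingHom t) (((X ^ 2 + 1 : ℝ[X])) • (1 : Matrix (Fin n) (Fin n) ℝ[X])
      - ((2 * X : ℝ[X])) • (A.map Polynomial.C))
    have h2 : ((((X ^ 2 + 1 : ℝ[X])) • (1 : Matrix (Fin n) (Fin n) ℝ[X])
        - ((2 * X : ℝ[X])) • (A.map Polynomial.C)).map (evalRingHom t))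
        = (t ^ 2 + 1) • (1 : Matrix (Fin n) (Fin n) ℝ) - (2 * t) • A := by
      ext i j
      by_cases hij : i = j
      · subst hij
        simp [Matrix.sub_apply, Matrix.smul_apply, Matrix.one_apply, Matrix.map_apply,
          smul_eq_mul]
      · simp [Matrix.sub_apply, Matrix.smul_apply, Matrix.one_apply_ne hij, Matrix.map_apply,
          smul_eq_mul]
    rw [hqdef]
    calc ((((X ^ 2 + 1 : ℝ[X])) • (1 : Matrix (Fin n) (Fin n) ℝ[X])
          - ((2 * X : ℝ[X])) • (A.map Polynomial.C)).det).eval t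
        = (evalRingHom t) (((X ^ 2 + 1 : ℝ[X])) • (1 : Matrix (Fin n) (Fin n) ℝ[X])
          - ((2 * X : ℝ[X])) • (A.map Polynomial.C)).det := rfl
      _ = _ := by rw [h1, RingHom.mapMatrix_apply, h2]
  have hpq : (fromBlocks A B C Aᵀ).charpoly = q := by
    apply eq_of_infinite_eval_eq
    have hfin : {x : ℝ | A.charpoly.IsRoot x}.Finite :=
      finite_setOf_isRoot (A.charpoly_monic.ne_zero)
    apply hfin.infinite_compl.mono
    intro x hx
    simp only [Set.mem_compl_iff, Set.mem_setOf_eq, IsRoot.def] at hx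
    have hdet : IsUnit ((x • (1 : Matrix (Fin n) (Fin n) ℝ) - A).det) := by
      rw [isUnit_iff_ne_zero]
      intro h0
      exact hx (by rw [eval_charpoly'' A x, h0])
    simp only [Set.mem_setOf_eq]
    rw [eval_charpoly'', hq x]
    exact key_det n A B C hAB hABC x hdet
  intro t
  rw [hpq, hq t]
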